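/- arXiv:1511.00302 — 3 statements merged into one kernel-verified Lean document; each statement's English description precedes it below -/
import Mathlib

section
/- Let γ ∈ (0,1) and let i(n) = ∫_{-∞}^{∞} e^{-n(x² + x³ + |x|^{3+γ})} dx for n ≥ 1. Then i(n) ≥ √(π/n) · (1 - Γ(2 + γ/2)/√π · n^{-(1+γ)/2}). -/
open Real MeasureTheory

lemma my_integrable_abs_rpow_mul_exp_neg_mul_sq {b : ℝ} (hb : 0 < b) {s : ℝ} (hs : -1 < s) :
    Integrable fun x : ℝ => |x| ^ s * Real.exp (-b * x ^ 2) := by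
  rw [← integrableOn_univ, ← @Set.Iio_union_Ici _ _ (0 : ℝ), integrableOn_union,
    integrableOn_Ici_iff_integrableOn_Ioi]
  constructor
  · rw [← (Measure.measurePreserving_neg (volume : Measure ℝ)).integrableOn_comp_preimage
      (Homeomorph.neg ℝ).measurableEmbedding]
    simp only [Function.comp_def, neg_sq, abs_neg, Set.neg_preimage, Set.neg_Iio, neg_zero]
    refine (integrableOn_rpow_mul_exp_neg_mul_sq hb hs).congr_fun
      (fun x hx => ?_) measurableSet_Ioi
    rw [abs_of_nonneg (le_of_lt hx)]
  · refine (integrableOn_rpow_mul_exp_neg_mul_sq hb hs).congr_fun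
      (fun x hx => ?_) measurableSet_Ioi
    rw [abs_of_nonneg (le_of_lt hx)]

lemma my_integral_abs_rpow_mul_exp_neg_mul_sq {b : ℝ} (hb : 0 < b) {s : ℝ} (hs : -1 < s) :
    ∫ x : ℝ, |x| ^ s * Real.exp (-b * x ^ 2)
      = b ^ (-(s + 1) / 2) * Real.Gamma ((s + 1) / 2) := by
  have h1 : ∫ x : ℝ, |x| ^ s * Real.exp (-b * x ^ 2)
      = 2 * ∫ x in Set.Ioi (0:ℝ), x ^ s * Real.exp (-b * x ^ 2) := by
    rw [← integral_comp_abs (f := fun y : ℝ => y ^ s * Real.exp (-b * y ^ 2))]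
    exact integral_congr_ae (Filter.Eventually.of_forall fun x => by simp [sq_abs])
  rw [h1]
  have h2 : ∫ x in Set.Ioi (0:ℝ), x ^ s * Real.exp (-b * x ^ 2)
      = ∫ x in Set.Ioi (0:ℝ), x ^ s * Real.exp (-b * x ^ (2:ℝ)) := by
    refine setIntegral_congr_fun measurableSet_Ioi (fun x _ => ?_)
    rw [rpow_two]
  rw [h2, integral_rpow_mul_exp_neg_mul_rpow two_pos hs hb]
  ring

lemma my_integral_odd_cube {b : ℝ} (hb : 0 < b) :
    ∫ x : ℝ, x ^ 3 * Real.exp (-b * x ^ 2) = 0 := by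
  have h := integral_neg_eq_self (fun x : ℝ => x ^ 3 * Real.exp (-b * x ^ 2))
    (volume : Measure ℝ)
  simp only [neg_sq, Odd.neg_pow (by decide : Odd 3), neg_mul] at h
  rw [integral_neg] at h
  simp only [neg_mul]
  linarith

theorem dixon_one_dim_lower_bound (γ : ℝ) (hγ : γ ∈ Set.Ioo (0 : ℝ) 1) (n : ℝ) (hn : 1 ≤ n) :
    Real.sqrt (Real.pi / n) *
      (1 - Real.Gamma (2 + γ / 2) / Real.sqrt Real.pi * n ^ (-(1 + γ) / 2))
    ≤ ∫ x : ℝ, Real.exp (-n * (x ^ 2 + x ^ 3 + |x| ^ (3 + γ))) := by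
  obtain ⟨hγ0, hγ1⟩ := hγ
  have hb : (0 : ℝ) < n := lt_of_lt_of_le one_pos hn
  have hs : (-1 : ℝ) < 3 + γ := by linarith
  -- integrability facts
  have hI0 : Integrable fun x : ℝ => Real.exp (-n * x ^ 2) := integrable_exp_neg_mul_sq hb
  have hI3 : Integrable fun x : ℝ => |x| ^ (3 + γ) * Real.exp (-n * x ^ 2) :=
    my_integrable_abs_rpow_mul_exp_neg_mul_sq hb hs
  have hIc : Integrable fun x : ℝ => x ^ 3 * Real.exp (-n * x ^ 2) := by
    refine (my_integrable_abs_rpow_mul_exp_neg_mul_sq hb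
      (by norm_num : (-1:ℝ) < (3:ℝ))).mono' ?_ ?_
    · exact (Continuous.mul (by continuity) (by continuity)).aestronglyMeasurable
    · filter_upwards with x
      rw [Real.norm_eq_abs, abs_mul, abs_of_nonneg (exp_pos _).le, abs_pow,
        ← Real.rpow_natCast |x| 3]
      norm_num
  -- the lower function
  set g : ℝ → ℝ := fun x =>
    Real.exp (-n * x ^ 2) - n * (x ^ 3 * Real.exp (-n * x ^ 2))
      - n * (|x| ^ (3 + γ) * Real.exp (-n * x ^ 2)) with hg
  have hIg : Integrable g := ((hI0.sub (hIc.const_mul n)).sub (hI3.const_mul n))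
  -- integrability of the target function
  have hcont : Continuous fun x : ℝ =>
      Real.exp (-n * (x ^ 2 + x ^ 3 + |x| ^ (3 + γ))) := by
    apply Real.continuous_exp.comp
    apply Continuous.mul continuous_const
    exact ((continuous_pow 2).add (continuous_pow 3)).add
      (continuous_abs.rpow_const (fun x => Or.inr (by linarith)))
  have hIf : Integrable fun x : ℝ => Real.exp (-n * (x ^ 2 + x ^ 3 + |x| ^ (3 + γ))) := by
    refine (hI0.const_mul (Real.exp n)).mono' hcont.aestronglyMeasurable ?_
    filter_upwards with x
    rw [Real.norm_eq_abs, abs_of_nonneg (exp_pos _).le, ← Real.exp_add]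
    apply Real.exp_le_exp.2
    have hkey : -1 ≤ x ^ 3 + |x| ^ (3 + γ) := by
      rcases le_or_gt 0 x with hx | hx
      · have h1 : 0 ≤ x ^ 3 := by positivity
        have h2 : 0 ≤ |x| ^ (3 + γ) := by positivity
        linarith
      · rcases le_or_gt (-1) x with hx1 | hx1
        · have h1 : -1 ≤ x ^ 3 := by nlinarith [sq_nonneg (x - 1), sq_nonneg (x + 1), sq_nonneg x]
          have h2 : 0 ≤ |x| ^ (3 + γ) := by positivity
          linarith
        · have hax : (1:ℝ) ≤ |x| := by rw [abs_of_neg hx]; linarith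
          have h3 : |x| ^ (3:ℝ) ≤ |x| ^ (3 + γ) :=
            Real.rpow_le_rpow_of_exponent_le hax (by linarith)
          have h4 : x ^ 3 = -(|x| ^ (3:ℝ)) := by
            rw [show (3:ℝ) = ((3:ℕ):ℝ) by norm_num, Real.rpow_natCast, abs_of_neg hx]; ring
          linarith
    nlinarith
  -- pointwise comparison
  have hpt : ∀ x : ℝ, g x ≤ Real.exp (-n * (x ^ 2 + x ^ 3 + |x| ^ (3 + γ))) := by
    intro x
    have heq : Real.exp (-n * (x ^ 2 + x ^ 3 + |x| ^ (3 + γ)))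
        = Real.exp (-n * x ^ 2) * Real.exp (-n * (x ^ 3 + |x| ^ (3 + γ))) := by
      rw [← Real.exp_add]; ring_nf
    rw [heq]
    show Real.exp (-n * x ^ 2) - n * (x ^ 3 * Real.exp (-n * x ^ 2))
      - n * (|x| ^ (3 + γ) * Real.exp (-n * x ^ 2)) ≤ _
    have h1 : -n * (x ^ 3 + |x| ^ (3 + γ)) + 1
        ≤ Real.exp (-n * (x ^ 3 + |x| ^ (3 + γ))) := Real.add_one_le_exp _
    have h2 : (0:ℝ) < Real.exp (-n * x ^ 2) := Real.exp_pos _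
    nlinarith [mul_le_mul_of_nonneg_left h1 h2.le]
  -- integrate
  have hmono := integral_mono hIg hIf hpt
  have hgval : ∫ x, g x = Real.sqrt (Real.pi / n)
      - n * (n ^ (-(3 + γ + 1) / 2) * Real.Gamma ((3 + γ + 1) / 2)) := by
    simp only [hg]
    have hIa : Integrable fun x : ℝ =>
        Real.exp (-n * x ^ 2) - n * (x ^ 3 * Real.exp (-n * x ^ 2)) := hI0.sub (hIc.const_mul n)
    rw [integral_sub hIa (hI3.const_mul n),
      integral_sub hI0 (hIc.const_mul n), integral_const_mul, integral_const_mul,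
      my_integral_odd_cube hb, my_integral_abs_rpow_mul_exp_neg_mul_sq hb hs,
      integral_gaussian]
    ring
  rw [hgval] at hmono
  refine le_trans (le_of_eq ?_) hmono
  have hΓ : (3 + γ + 1) / 2 = 2 + γ / 2 := by ring
  rw [hΓ]
  have hsqrt : Real.sqrt (Real.pi / n) = Real.sqrt Real.pi * n ^ (-(1:ℝ)/2) := by
    rw [Real.sqrt_div pi_pos.le, Real.sqrt_eq_rpow n, div_eq_mul_inv,
      ← Real.rpow_neg hb.le]
    norm_num
  have hne : Real.sqrt Real.pi ≠ 0 := by positivity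
  have e1 : n * n ^ (-(3 + γ + 1) / 2) = n ^ (-(1:ℝ) / 2) * n ^ (-(1 + γ) / 2) := by
    have h1 : n * n ^ (-(3 + γ + 1) / 2) = n ^ ((1:ℝ) + -(3 + γ + 1) / 2) := by
      rw [Real.rpow_add hb, Real.rpow_one]
    rw [h1, ← Real.rpow_add hb]
    congr 1
    ring
  rw [hsqrt, ← mul_assoc, e1]
  field_simp
end

section
/- Let γ ∈ (0,1) and n ≥ 1. Then ∫_0^∞ e^{-n(x² + x³ + x^{3+γ})} dx ≤ (1/2)√(π/n) · (1 - Γ(2+γ/2)/√π · n^{-(1+γ)/2} - 1/√(πn) + (15/8) n^{-1} + 2Γ((7+γ)/2)/√π · n^{-(1+γ/2)} + Γ(7/2+γ)/√π · n^{-(1+γ)}). -/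
open Real MeasureTheory Set

lemma exp_neg_le_quadratic {y : ℝ} (hy : 0 ≤ y) :
    Real.exp (-y) ≤ 1 - y + y ^ 2 / 2 := by
  have h1 := Real.quadratic_le_exp_of_nonneg hy
  have h2 : Real.exp (-y) * Real.exp y = 1 := by rw [← Real.exp_add]; simp
  have h3 : 0 < Real.exp (-y) := Real.exp_pos _
  nlinarith [sq_nonneg (y ^ 2), sq_nonneg y]

theorem dixon_one_dim_upper_bound (γ : ℝ) (hγ : γ ∈ Set.Ioo (0 : ℝ) 1) (n : ℝ) (hn : 1 ≤ n) :
    ∫ x in Set.Ioi (0 : ℝ), Real.exp (-n * (x ^ 2 + x ^ 3 + x ^ (3 + γ)))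
    ≤ 1 / 2 * Real.sqrt (Real.pi / n) *
        (1 - Real.Gamma (2 + γ / 2) / Real.sqrt Real.pi * n ^ (-(1 + γ) / 2)
          - 1 / Real.sqrt (Real.pi * n)
          + 15 / 8 * n⁻¹
          + 2 * Real.Gamma ((7 + γ) / 2) / Real.sqrt Real.pi * n ^ (-(1 + γ / 2))
          + Real.Gamma (7 / 2 + γ) / Real.sqrt Real.pi * n ^ (-(1 + γ))) := by
  obtain ⟨hγ0, hγ1⟩ := hγ
  have hn0 : (0 : ℝ) < n := lt_of_lt_of_le one_pos hn
  have hsp : (0:ℝ) < Real.sqrt Real.pi := Real.sqrt_pos.mpr Real.pi_pos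
  -- moment formula
  have hM : ∀ s : ℝ, -1 < s →
      ∫ x in Ioi (0:ℝ), x ^ s * Real.exp (-n * x ^ 2)
        = n ^ (-(s + 1) / 2) * (1 / 2) * Real.Gamma ((s + 1) / 2) := by
    intro s hs
    rw [show (fun x : ℝ => x ^ s * Real.exp (-n * x ^ 2))
        = fun x : ℝ => x ^ s * Real.exp (-n * x ^ (2:ℝ)) from by
      funext x
      rw [show x ^ ((2:ℝ)) = x ^ (2:ℕ) from by
        rw [← Real.rpow_natCast x 2]; norm_num]]
    exact integral_rpow_mul_exp_neg_mul_rpow two_pos hs hn0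
  -- integrability of pieces, as pointwise lambdas
  have hi : ∀ s : ℝ, -1 < s →
      IntegrableOn (fun x : ℝ => x ^ s * Real.exp (-n * x ^ 2)) (Ioi 0) :=
    fun s hs => integrableOn_rpow_mul_exp_neg_mul_sq hn0 hs
  have i0 := hi 0 (by norm_num)
  have i3 := hi 3 (by norm_num)
  have i3g := hi (3 + γ) (by linarith)
  have i6 := hi 6 (by norm_num)
  have i62g := hi (6 + 2 * γ) (by linarith)
  have I2 : IntegrableOn (fun x : ℝ =>
      x ^ (0:ℝ) * Real.exp (-n * x ^ 2) - n * (x ^ (3:ℝ) * Real.exp (-n * x ^ 2)))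
      (Ioi 0) := i0.sub (i3.const_mul n)
  have I3 : IntegrableOn (fun x : ℝ =>
      x ^ (0:ℝ) * Real.exp (-n * x ^ 2) - n * (x ^ (3:ℝ) * Real.exp (-n * x ^ 2))
        - n * (x ^ (3 + γ) * Real.exp (-n * x ^ 2)))
      (Ioi 0) := I2.sub (i3g.const_mul n)
  have I4 : IntegrableOn (fun x : ℝ =>
      x ^ (0:ℝ) * Real.exp (-n * x ^ 2) - n * (x ^ (3:ℝ) * Real.exp (-n * x ^ 2))
        - n * (x ^ (3 + γ) * Real.exp (-n * x ^ 2))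
        + n ^ 2 / 2 * (x ^ (6:ℝ) * Real.exp (-n * x ^ 2)))
      (Ioi 0) := I3.add (i6.const_mul (n ^ 2 / 2))
  have I5 : IntegrableOn (fun x : ℝ =>
      x ^ (0:ℝ) * Real.exp (-n * x ^ 2) - n * (x ^ (3:ℝ) * Real.exp (-n * x ^ 2))
        - n * (x ^ (3 + γ) * Real.exp (-n * x ^ 2))
        + n ^ 2 / 2 * (x ^ (6:ℝ) * Real.exp (-n * x ^ 2))
        + n ^ 2 * (x ^ (6 + γ) * Real.exp (-n * x ^ 2)))
      (Ioi 0) := I4.add ((hi (6 + γ) (by linarith)).const_mul (n ^ 2))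
  have I6 : IntegrableOn (fun x : ℝ =>
      x ^ (0:ℝ) * Real.exp (-n * x ^ 2) - n * (x ^ (3:ℝ) * Real.exp (-n * x ^ 2))
        - n * (x ^ (3 + γ) * Real.exp (-n * x ^ 2))
        + n ^ 2 / 2 * (x ^ (6:ℝ) * Real.exp (-n * x ^ 2))
        + n ^ 2 * (x ^ (6 + γ) * Real.exp (-n * x ^ 2))
        + n ^ 2 / 2 * (x ^ (6 + 2 * γ) * Real.exp (-n * x ^ 2)))
      (Ioi 0) := I5.add (i62g.const_mul (n ^ 2 / 2))
  -- integrability of LHS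
  have hiL : IntegrableOn
      (fun x : ℝ => Real.exp (-n * (x ^ 2 + x ^ 3 + x ^ (3 + γ)))) (Ioi 0) := by
    apply Integrable.mono' ((integrable_exp_neg_mul_sq hn0).integrableOn)
    · apply Measurable.aestronglyMeasurable
      fun_prop
    · filter_upwards [ae_restrict_mem measurableSet_Ioi] with x hx
      have hx0 : (0:ℝ) < x := hx
      rw [Real.norm_of_nonneg (Real.exp_pos _).le, Real.exp_le_exp]
      have h1 : 0 ≤ x ^ 3 := by positivity
      have h2 : 0 ≤ x ^ (3 + γ) := Real.rpow_nonneg hx0.le _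
      nlinarith
  -- pointwise bound
  have hpt : ∀ x ∈ Ioi (0:ℝ),
      Real.exp (-n * (x ^ 2 + x ^ 3 + x ^ (3 + γ)))
        ≤ x ^ (0:ℝ) * Real.exp (-n * x ^ 2) - n * (x ^ (3:ℝ) * Real.exp (-n * x ^ 2))
            - n * (x ^ (3 + γ) * Real.exp (-n * x ^ 2))
            + n ^ 2 / 2 * (x ^ (6:ℝ) * Real.exp (-n * x ^ 2))
            + n ^ 2 * (x ^ (6 + γ) * Real.exp (-n * x ^ 2))
            + n ^ 2 / 2 * (x ^ (6 + 2 * γ) * Real.exp (-n * x ^ 2)) := by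
    intro x hx
    have hx0 : (0:ℝ) < x := hx
    have h1 : (0:ℝ) ≤ x ^ 3 := by positivity
    have h2 : (0:ℝ) ≤ x ^ (3 + γ) := Real.rpow_nonneg hx0.le _
    have hy0 : 0 ≤ n * (x ^ 3 + x ^ (3 + γ)) := by positivity
    have hE : (0:ℝ) < Real.exp (-n * x ^ 2) := Real.exp_pos _
    have hb := exp_neg_le_quadratic hy0
    have e0 : x ^ (0:ℝ) = 1 := Real.rpow_zero x
    have e1 : x ^ ((3:ℝ)) = x ^ (3:ℕ) := by rw [← Real.rpow_natCast x 3]; norm_num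
    have e2 : x ^ ((6:ℝ)) = x ^ (3:ℕ) * x ^ (3:ℕ) := by
      rw [show x ^ (3:ℕ) * x ^ (3:ℕ) = x ^ (6:ℕ) from by ring, ← Real.rpow_natCast x 6]
      norm_num
    have e3 : x ^ ((6:ℝ) + γ) = x ^ (3:ℕ) * x ^ (3 + γ) := by
      rw [← Real.rpow_natCast x 3, ← Real.rpow_add hx0]
      congr 1
      push_cast; ring
    have e4 : x ^ (6 + 2 * γ) = x ^ (3 + γ) * x ^ (3 + γ) := by
      rw [← Real.rpow_add hx0]
      congr 1
      ring
    have hsplit : Real.exp (-n * (x ^ 2 + x ^ 3 + x ^ (3 + γ)))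
        = Real.exp (-n * x ^ 2) * Real.exp (-(n * (x ^ 3 + x ^ (3 + γ)))) := by
      rw [← Real.exp_add]; congr 1; ring
    rw [hsplit, e0, e1, e2, e3, e4]
    nlinarith [mul_le_mul_of_nonneg_left hb hE.le]
  -- split the integral of the dominating function
  have hTg : ∫ x in Ioi (0:ℝ),
      (x ^ (0:ℝ) * Real.exp (-n * x ^ 2) - n * (x ^ (3:ℝ) * Real.exp (-n * x ^ 2))
        - n * (x ^ (3 + γ) * Real.exp (-n * x ^ 2))
        + n ^ 2 / 2 * (x ^ (6:ℝ) * Real.exp (-n * x ^ 2))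
        + n ^ 2 * (x ^ (6 + γ) * Real.exp (-n * x ^ 2))
        + n ^ 2 / 2 * (x ^ (6 + 2 * γ) * Real.exp (-n * x ^ 2)))
      = (∫ x in Ioi (0:ℝ), x ^ (0:ℝ) * Real.exp (-n * x ^ 2))
        - n * (∫ x in Ioi (0:ℝ), x ^ (3:ℝ) * Real.exp (-n * x ^ 2))
        - n * (∫ x in Ioi (0:ℝ), x ^ (3 + γ) * Real.exp (-n * x ^ 2))
        + n ^ 2 / 2 * (∫ x in Ioi (0:ℝ), x ^ (6:ℝ) * Real.exp (-n * x ^ 2))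
        + n ^ 2 * (∫ x in Ioi (0:ℝ), x ^ (6 + γ) * Real.exp (-n * x ^ 2))
        + n ^ 2 / 2 * (∫ x in Ioi (0:ℝ), x ^ (6 + 2 * γ) * Real.exp (-n * x ^ 2)) := by
    rw [integral_add I5 (i62g.const_mul (n ^ 2 / 2)),
      integral_add I4 ((hi (6 + γ) (by linarith)).const_mul (n ^ 2)),
      integral_add I3 (i6.const_mul (n ^ 2 / 2)),
      integral_sub I2 (i3g.const_mul n),
      integral_sub i0 (i3.const_mul n)]
    simp only [integral_const_mul]
  -- values of the moments
  have hG72 : Real.Gamma ((7:ℝ)/2) = 15 / 8 * Real.sqrt Real.pi := by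
    rw [show (7:ℝ)/2 = 1/2 + 1 + 1 + 1 by norm_num,
      Real.Gamma_add_one (by norm_num : (1:ℝ)/2 + 1 + 1 ≠ 0),
      Real.Gamma_add_one (by norm_num : (1:ℝ)/2 + 1 ≠ 0),
      Real.Gamma_add_one (by norm_num : (1:ℝ)/2 ≠ 0),
      Real.Gamma_one_half_eq]
    ring
  have M0 : ∫ x in Ioi (0:ℝ), x ^ (0:ℝ) * Real.exp (-n * x ^ 2)
      = n ^ (-(1:ℝ)/2) * (1/2) * Real.sqrt Real.pi := by
    rw [hM 0 (by norm_num)]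
    norm_num [Real.Gamma_one_half_eq]
  have M3 : ∫ x in Ioi (0:ℝ), x ^ (3:ℝ) * Real.exp (-n * x ^ 2)
      = n ^ (-(2:ℝ)) * (1/2) := by
    rw [hM 3 (by norm_num)]
    norm_num [Real.Gamma_two]
  have M3g : ∫ x in Ioi (0:ℝ), x ^ (3 + γ) * Real.exp (-n * x ^ 2)
      = n ^ (-(4+γ)/2) * (1/2) * Real.Gamma (2 + γ/2) := by
    rw [hM (3 + γ) (by linarith),
      show -(3+γ+1)/2 = -(4+γ)/2 by ring, show (3+γ+1)/2 = 2+γ/2 by ring]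
  have M6 : ∫ x in Ioi (0:ℝ), x ^ (6:ℝ) * Real.exp (-n * x ^ 2)
      = n ^ (-(7:ℝ)/2) * (1/2) * (15/8 * Real.sqrt Real.pi) := by
    rw [hM 6 (by norm_num), show -((6:ℝ)+1)/2 = -(7:ℝ)/2 by norm_num,
      show ((6:ℝ)+1)/2 = (7:ℝ)/2 by norm_num, hG72]
  have M6g : ∫ x in Ioi (0:ℝ), x ^ (6 + γ) * Real.exp (-n * x ^ 2)
      = n ^ (-(7+γ)/2) * (1/2) * Real.Gamma ((7+γ)/2) := by
    rw [hM (6 + γ) (by linarith), show (6+γ+1:ℝ) = 7+γ by ring]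
  have M62g : ∫ x in Ioi (0:ℝ), x ^ (6 + 2*γ) * Real.exp (-n * x ^ 2)
      = n ^ (-(7+2*γ)/2) * (1/2) * Real.Gamma (7/2 + γ) := by
    rw [hM (6 + 2*γ) (by linarith),
      show -(6+2*γ+1)/2 = -(7+2*γ)/2 by ring, show (6+2*γ+1)/2 = 7/2+γ by ring]
  -- rpow arithmetic helpers
  have fadd : ∀ a b c : ℝ, a + b = c → n ^ a * n ^ b = n ^ c := fun a b c h => by
    rw [← Real.rpow_add hn0, h]
  have fm1 : ∀ a c : ℝ, 1 + a = c → n * n ^ a = n ^ c := fun a c h => by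
    calc n * n ^ a = n ^ (1:ℝ) * n ^ a := by rw [Real.rpow_one]
      _ = n ^ c := fadd _ _ _ h
  have fm2 : ∀ a c : ℝ, 2 + a = c → n ^ 2 * n ^ a = n ^ c := fun a c h => by
    calc n ^ 2 * n ^ a = n * (n * n ^ a) := by ring
      _ = n * n ^ (1 + a) := by rw [fm1 a (1+a) rfl]
      _ = n ^ c := fm1 _ _ (by rw [← h]; ring)
  have hinv : (n ^ ((1:ℝ)/2))⁻¹ = n ^ (-(1:ℝ)/2) := by
    rw [show -(1:ℝ)/2 = -((1:ℝ)/2) by ring, Real.rpow_neg hn0.le]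
  have hs1 : Real.sqrt (Real.pi / n) = Real.sqrt Real.pi * n ^ (-(1:ℝ)/2) := by
    rw [show Real.pi / n = Real.pi * n⁻¹ by ring, Real.sqrt_mul Real.pi_pos.le,
      Real.sqrt_inv, Real.sqrt_eq_rpow n, hinv]
  have hs2 : Real.sqrt (Real.pi * n) = Real.sqrt Real.pi * n ^ ((1:ℝ)/2) := by
    rw [Real.sqrt_mul Real.pi_pos.le, Real.sqrt_eq_rpow n]
  have hninv : n⁻¹ = n ^ (-(1:ℝ)) := by
    rw [show -(1:ℝ) = ((-1:ℝ)) by norm_num, Real.rpow_neg_one]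
  -- canonical forms
  set g2 := Real.Gamma (2 + γ/2) with hg2
  set g4 := Real.Gamma ((7+γ)/2) with hg4
  set g5 := Real.Gamma (7/2 + γ) with hg5
  have hg4p : 0 < g4 := Real.Gamma_pos_of_pos (by linarith)
  have hg5p : 0 < g5 := Real.Gamma_pos_of_pos (by linarith)
  have key : ∫ x in Ioi (0:ℝ), Real.exp (-n * (x ^ 2 + x ^ 3 + x ^ (3 + γ)))
      ≤ Real.sqrt Real.pi / 2 * n ^ (-(1:ℝ)/2) - 1/2 * n ^ (-(1:ℝ))
        - g2/2 * n ^ (-(2+γ)/2) + 15 * Real.sqrt Real.pi / 32 * n ^ (-(3:ℝ)/2)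
        + g4/2 * n ^ (-(3+γ)/2) + g5/4 * n ^ (-(3+2*γ)/2) := by
    calc ∫ x in Ioi (0:ℝ), Real.exp (-n * (x ^ 2 + x ^ 3 + x ^ (3 + γ)))
        ≤ _ := setIntegral_mono_on hiL I6 measurableSet_Ioi hpt
      _ = _ := by
          rw [hTg, M0, M3, M3g, M6, M6g, M62g]
          calc n ^ (-(1:ℝ)/2) * (1/2) * Real.sqrt Real.pi
                - n * (n ^ (-(2:ℝ)) * (1/2))
                - n * (n ^ (-(4+γ)/2) * (1/2) * g2)
                + n ^ 2 / 2 * (n ^ (-(7:ℝ)/2) * (1/2) * (15/8 * Real.sqrt Real.pi))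
                + n ^ 2 * (n ^ (-(7+γ)/2) * (1/2) * g4)
                + n ^ 2 / 2 * (n ^ (-(7+2*γ)/2) * (1/2) * g5)
              = Real.sqrt Real.pi / 2 * n ^ (-(1:ℝ)/2)
                - 1/2 * (n * n ^ (-(2:ℝ)))
                - g2/2 * (n * n ^ (-(4+γ)/2))
                + 15 * Real.sqrt Real.pi / 32 * (n ^ 2 * n ^ (-(7:ℝ)/2))
                + g4/2 * (n ^ 2 * n ^ (-(7+γ)/2))
                + g5/4 * (n ^ 2 * n ^ (-(7+2*γ)/2)) := by ring
            _ = Real.sqrt Real.pi / 2 * n ^ (-(1:ℝ)/2) - 1/2 * n ^ (-(1:ℝ))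
                - g2/2 * n ^ (-(2+γ)/2)
                + 15 * Real.sqrt Real.pi / 32 * n ^ (-(3:ℝ)/2)
                + g4/2 * n ^ (-(3+γ)/2) + g5/4 * n ^ (-(3+2*γ)/2) := by
                rw [fm1 _ _ (show (1:ℝ) + -(2:ℝ) = -(1:ℝ) by norm_num),
                  fm1 _ _ (show (1:ℝ) + -(4+γ)/2 = -(2+γ)/2 by ring),
                  fm2 _ _ (show (2:ℝ) + -(7:ℝ)/2 = -(3:ℝ)/2 by norm_num),
                  fm2 _ _ (show (2:ℝ) + -(7+γ)/2 = -(3+γ)/2 by ring),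
                  fm2 _ _ (show (2:ℝ) + -(7+2*γ)/2 = -(3+2*γ)/2 by ring)]
  have hR : 1 / 2 * Real.sqrt (Real.pi / n) *
        (1 - g2 / Real.sqrt Real.pi * n ^ (-(1 + γ) / 2)
          - 1 / Real.sqrt (Real.pi * n)
          + 15 / 8 * n⁻¹
          + 2 * g4 / Real.sqrt Real.pi * n ^ (-(1 + γ / 2))
          + g5 / Real.sqrt Real.pi * n ^ (-(1 + γ)))
      = Real.sqrt Real.pi / 2 * n ^ (-(1:ℝ)/2) - 1/2 * n ^ (-(1:ℝ))
        - g2/2 * n ^ (-(2+γ)/2) + 15 * Real.sqrt Real.pi / 16 * n ^ (-(3:ℝ)/2)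
        + g4 * n ^ (-(3+γ)/2) + g5/2 * n ^ (-(3+2*γ)/2) := by
    rw [hs1, hs2, hninv]
    calc 1 / 2 * (Real.sqrt Real.pi * n ^ (-(1:ℝ)/2)) *
          (1 - g2 / Real.sqrt Real.pi * n ^ (-(1 + γ) / 2)
            - 1 / (Real.sqrt Real.pi * n ^ ((1:ℝ)/2))
            + 15 / 8 * n ^ (-(1:ℝ))
            + 2 * g4 / Real.sqrt Real.pi * n ^ (-(1 + γ / 2))
            + g5 / Real.sqrt Real.pi * n ^ (-(1 + γ)))
        = Real.sqrt Real.pi / 2 * n ^ (-(1:ℝ)/2)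
          - g2/2 * (Real.sqrt Real.pi / Real.sqrt Real.pi)
              * (n ^ (-(1:ℝ)/2) * n ^ (-(1 + γ) / 2))
          - 1/2 * (Real.sqrt Real.pi / Real.sqrt Real.pi)
              * (n ^ (-(1:ℝ)/2) * (n ^ ((1:ℝ)/2))⁻¹)
          + 15 * Real.sqrt Real.pi / 16 * (n ^ (-(1:ℝ)/2) * n ^ (-(1:ℝ)))
          + g4 * (Real.sqrt Real.pi / Real.sqrt Real.pi)
              * (n ^ (-(1:ℝ)/2) * n ^ (-(1 + γ / 2)))
          + g5/2 * (Real.sqrt Real.pi / Real.sqrt Real.pi)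
              * (n ^ (-(1:ℝ)/2) * n ^ (-(1 + γ))) := by ring
      _ = Real.sqrt Real.pi / 2 * n ^ (-(1:ℝ)/2) - 1/2 * n ^ (-(1:ℝ))
          - g2/2 * n ^ (-(2+γ)/2) + 15 * Real.sqrt Real.pi / 16 * n ^ (-(3:ℝ)/2)
          + g4 * n ^ (-(3+γ)/2) + g5/2 * n ^ (-(3+2*γ)/2) := by
          rw [div_self hsp.ne', hinv,
            fadd _ _ _ (show -(1:ℝ)/2 + -(1 + γ)/2 = -(2+γ)/2 by ring),
            fadd _ _ _ (show -(1:ℝ)/2 + -(1:ℝ)/2 = -(1:ℝ) by norm_num),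
            fadd _ _ _ (show -(1:ℝ)/2 + -(1:ℝ) = -(3:ℝ)/2 by norm_num),
            fadd _ _ _ (show -(1:ℝ)/2 + -(1 + γ/2) = -(3+γ)/2 by ring),
            fadd _ _ _ (show -(1:ℝ)/2 + -(1 + γ) = -(3+2*γ)/2 by ring)]
          ring
  rw [hR]
  have hP3 : 0 ≤ Real.sqrt Real.pi * n ^ (-(3:ℝ)/2) :=
    mul_nonneg hsp.le (Real.rpow_nonneg hn0.le _)
  have hP4 : 0 ≤ g4 * n ^ (-(3+γ)/2) :=
    mul_nonneg hg4p.le (Real.rpow_nonneg hn0.le _)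
  have hP5 : 0 ≤ g5 * n ^ (-(3+2*γ)/2) :=
    mul_nonneg hg5p.le (Real.rpow_nonneg hn0.le _)
  linarith [key]
end

section
/- Let f(x,y) = -log cos((√3/2)x - (1/2)y + π/6) - log cos(-(√3/2)x - (1/2)y + π/6) - log cos(y + π/6) + 3 log(√3/2), defined near (0,0). Then for r ∈ (0, π/3) and all (x,y) with x² + y² ≤ r², |f(x,y) - x² - y² - (√3/9)(y³ - 3x²y)| ≤ C (x² + y²)², where C = (3/32) · (1 + 2 sin²(r + π/6))/cos⁴(r + π/6). -/
open Real Set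

lemma upBound {w w' : ℝ → ℝ} {K : ℝ} {k : ℕ} {a : ℝ} (ha : 0 ≤ a)
    (hw : ∀ s ∈ Icc (0:ℝ) a, HasDerivAt w (w' s) s)
    (h0 : w 0 = 0)
    (hb : ∀ s ∈ Icc (0:ℝ) a, w' s ≤ K * s ^ k) :
    w a ≤ K * a ^ (k + 1) / (k + 1) := by
  set φ : ℝ → ℝ := fun s => K / (k + 1) * s ^ (k + 1) - w s with hφ
  have hk : ((k : ℝ) + 1) ≠ 0 := by positivity
  have hder : ∀ s ∈ Icc (0:ℝ) a, HasDerivAt φ (K * s ^ k - w' s) s := by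
    intro s hs
    have h1 : HasDerivAt (fun s : ℝ => K / (k + 1) * s ^ (k + 1))
        (K / (k + 1) * ((k + 1) * s ^ k)) s := by
      exact (hasDerivAt_pow (k + 1) s).const_mul _ |>.congr_deriv (by push_cast; ring)
    have := h1.sub (hw s hs)
    refine this.congr_deriv ?_
    symm
    field_simp
  have hmono : MonotoneOn φ (Icc (0:ℝ) a) := by
    apply monotoneOn_of_deriv_nonneg (convex_Icc _ _)
    · exact fun s hs => (hder s hs).continuousAt.continuousWithinAt
    · intro s hs
      rw [interior_Icc] at hs
      exact (hder s (Ioo_subset_Icc_self hs)).differentiableAt.differentiableWithinAt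
    · intro s hs
      rw [interior_Icc] at hs
      rw [(hder s (Ioo_subset_Icc_self hs)).deriv]
      have := hb s (Ioo_subset_Icc_self hs)
      linarith
  have h01 : φ 0 ≤ φ a := hmono (left_mem_Icc.2 ha) (right_mem_Icc.2 ha) ha
  simp only [hφ, h0] at h01
  simp only [ne_eq, zero_pow, Nat.succ_ne_zero, not_false_iff] at h01
  have : K / (k + 1) * a ^ (k + 1) = K * a ^ (k + 1) / (k + 1) := by ring
  nlinarith [h01]

lemma absBoundPos {w w' : ℝ → ℝ} {K : ℝ} {k : ℕ} {a : ℝ} (ha : 0 ≤ a)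
    (hw : ∀ s ∈ Icc (0:ℝ) a, HasDerivAt w (w' s) s)
    (h0 : w 0 = 0)
    (hb : ∀ s ∈ Icc (0:ℝ) a, |w' s| ≤ K * s ^ k) :
    |w a| ≤ K * a ^ (k + 1) / (k + 1) := by
  have hup := upBound ha hw h0 (fun s hs => (abs_le.1 (hb s hs)).2)
  have hdn := upBound ha (fun s hs => (hw s hs).neg) (by show -w 0 = 0; rw [h0, neg_zero])
      (fun s hs => by have := (abs_le.1 (hb s hs)).1; show -(w' s) ≤ K * s ^ k; linarith)
  rw [abs_le]
  constructor
  · have : -w a ≤ K * a ^ (k+1) / (k+1) := hdn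
    linarith
  · exact hup

lemma absBound {w w' : ℝ → ℝ} {K : ℝ} {k : ℕ} {r t : ℝ}
    (hw : ∀ s ∈ Icc (-r) r, HasDerivAt w (w' s) s)
    (h0 : w 0 = 0)
    (hb : ∀ s ∈ Icc (-r) r, |w' s| ≤ K * |s| ^ k)
    (ht : t ∈ Icc (-r) r) :
    |w t| ≤ K * |t| ^ (k + 1) / (k + 1) := by
  rcases le_or_gt 0 t with h | h
  · have hsub : Icc (0:ℝ) t ⊆ Icc (-r) r := by
      apply Icc_subset_Icc
      · linarith [ht.1, ht.2]
      · exact ht.2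
    have := absBoundPos h (fun s hs => hw s (hsub hs)) h0
        (fun s hs => by
          have := hb s (hsub hs)
          rwa [abs_of_nonneg hs.1] at this)
    rwa [abs_of_nonneg h]
  · have h' : 0 ≤ -t := by linarith
    have hsub : Icc (0:ℝ) (-t) ⊆ Icc (-r) r := by
      apply Icc_subset_Icc
      · linarith [ht.1, ht.2]
      · linarith [ht.1]
    have hw' : ∀ s ∈ Icc (0:ℝ) (-t), HasDerivAt (fun s => w (-s)) (-(w' (-s))) s := by
      intro s hs
      have hsm : -s ∈ Icc (-r) r := by
        constructor <;> [linarith [hs.2, ht.1]; linarith [hs.1, ht.2, ht.1]]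
      have h := (hw (-s) hsm).comp s (hasDerivAt_neg s)
      simp at h
      exact h
    have := absBoundPos h' hw' (by simpa using h0)
        (fun s hs => by
          have hsm : -s ∈ Icc (-r) r := by
            constructor <;> [linarith [hs.2, ht.1]; linarith [hs.1, ht.2, ht.1]]
          have := hb (-s) hsm
          simp only [abs_neg] at this ⊢
          rwa [abs_of_nonneg hs.1] at this)
    simp only [neg_neg] at this
    rwa [abs_of_neg h]


noncomputable def G0 (s : ℝ) : ℝ := -Real.log (Real.cos (s + π/6)) + Real.log (Real.sqrt 3 / 2)
noncomputable def G1 (s : ℝ) : ℝ := Real.sin (s + π/6) / Real.cos (s + π/6)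
noncomputable def G2 (s : ℝ) : ℝ := 1 / Real.cos (s + π/6) ^ 2
noncomputable def G3 (s : ℝ) : ℝ := 2 * Real.sin (s + π/6) / Real.cos (s + π/6) ^ 3
noncomputable def G4 (s : ℝ) : ℝ := 2 * (1 + 2 * Real.sin (s + π/6) ^ 2) / Real.cos (s + π/6) ^ 4

lemma hshift (s : ℝ) : HasDerivAt (fun s : ℝ => s + π/6) 1 s := (hasDerivAt_id s).add_const _

lemma d0 (s : ℝ) (hc : Real.cos (s + π/6) ≠ 0) : HasDerivAt G0 (G1 s) s := by
  have hcos : HasDerivAt (fun s : ℝ => Real.cos (s + π/6)) (-Real.sin (s + π/6) * 1) s :=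
    (hshift s).cos
  have := (hcos.log hc).neg.add_const (Real.log (Real.sqrt 3 / 2))
  refine this.congr_deriv ?_
  symm
  unfold G1; field_simp

lemma d1 (s : ℝ) (hc : Real.cos (s + π/6) ≠ 0) : HasDerivAt G1 (G2 s) s := by
  have hcos : HasDerivAt (fun s : ℝ => Real.cos (s + π/6)) (-Real.sin (s + π/6) * 1) s :=
    (hshift s).cos
  have hsin : HasDerivAt (fun s : ℝ => Real.sin (s + π/6)) (Real.cos (s + π/6) * 1) s :=
    (hshift s).sin
  have := hsin.div hcos hc
  refine this.congr_deriv ?_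
  symm
  unfold G2
  have hpy := Real.sin_sq_add_cos_sq (s + π/6)
  set cs := Real.cos (s + π/6)
  set sn := Real.sin (s + π/6)
  field_simp
  linear_combination -hpy
lemma d2 (s : ℝ) (hc : Real.cos (s + π/6) ≠ 0) : HasDerivAt G2 (G3 s) s := by
  have hcos : HasDerivAt (fun s : ℝ => Real.cos (s + π/6)) (-Real.sin (s + π/6) * 1) s :=
    (hshift s).cos
  have := (hasDerivAt_const s (1:ℝ)).div (hcos.pow 2) (pow_ne_zero 2 hc)
  refine this.congr_deriv ?_
  symm
  unfold G3
  simp only [Pi.pow_apply]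
  set cs := Real.cos (s + π/6)
  field_simp
  ring
lemma d3 (s : ℝ) (hc : Real.cos (s + π/6) ≠ 0) : HasDerivAt G3 (G4 s) s := by
  have hcos : HasDerivAt (fun s : ℝ => Real.cos (s + π/6)) (-Real.sin (s + π/6) * 1) s :=
    (hshift s).cos
  have hsin : HasDerivAt (fun s : ℝ => Real.sin (s + π/6)) (Real.cos (s + π/6) * 1) s :=
    (hshift s).sin
  have := (hsin.const_mul 2).div (hcos.pow 3) (pow_ne_zero 3 hc)
  refine this.congr_deriv ?_
  symm
  unfold G4
  simp only [Pi.pow_apply]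
  have hpy := Real.sin_sq_add_cos_sq (s + π/6)
  set cs := Real.cos (s + π/6)
  set sn := Real.sin (s + π/6)
  field_simp
  linear_combination (-cs ^ 2) * hpy


section aux

lemma hG00 : (fun s : ℝ => -Real.log (Real.cos (s + π/6)) + Real.log (Real.sqrt 3 / 2)) 0 = 0 := by
  simp [Real.cos_pi_div_six]

lemma sqrt3_sq : (Real.sqrt 3) ^ 2 = 3 := Real.sq_sqrt (by norm_num)
lemma sqrt3_pos : 0 < Real.sqrt 3 := Real.sqrt_pos.2 (by norm_num)

lemma hG10 : Real.sin ((0:ℝ) + π/6) / Real.cos ((0:ℝ) + π/6) = Real.sqrt 3 / 3 := by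
  rw [zero_add, Real.cos_pi_div_six, Real.sin_pi_div_six]
  have h3 := sqrt3_sq
  have := sqrt3_pos
  field_simp
  linarith

lemma hG20 : 1 / Real.cos ((0:ℝ) + π/6) ^ 2 = (4:ℝ)/3 := by
  rw [zero_add, Real.cos_pi_div_six]
  have h3 := sqrt3_sq
  field_simp
  linarith

lemma hG30 : 2 * Real.sin ((0:ℝ) + π/6) / Real.cos ((0:ℝ) + π/6) ^ 3 = 8 * Real.sqrt 3 / 9 := by
  rw [zero_add, Real.cos_pi_div_six, Real.sin_pi_div_six]
  have h3 := sqrt3_sq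
  have := sqrt3_pos
  field_simp
  linear_combination (-8 * Real.sqrt 3 ^ 2 - 24) * h3

end aux


lemma cos_lower {r : ℝ} (hr0 : 0 < r) (hr1 : r < π/3) {s : ℝ} (hs : s ∈ Icc (-r) r) :
    Real.cos (r + π/6) ≤ Real.cos (s + π/6) := by
  have hpi := Real.pi_gt_three
  rw [← Real.cos_abs (s + π/6)]
  apply Real.cos_le_cos_of_nonneg_of_le_pi (abs_nonneg _) (by linarith : r + π/6 ≤ π)
  rw [abs_le]
  constructor
  · linarith [hs.1]
  · linarith [hs.2]

lemma cos_r_pos {r : ℝ} (hr0 : 0 < r) (hr1 : r < π/3) : 0 < Real.cos (r + π/6) := by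
  apply Real.cos_pos_of_mem_Ioo
  constructor
  · linarith [Real.pi_pos]
  · show r + π/6 < π/2
    linarith

lemma taylor3 {r : ℝ} (hr0 : 0 < r) (hr1 : r < π/3) {t : ℝ} (ht : t ∈ Icc (-r) r) :
    |G0 t - (Real.sqrt 3 / 3 * t + 2/3 * t^2 + 4 * Real.sqrt 3 / 27 * t^3)| ≤
      (2 * (1 + 2 * Real.sin (r + π/6) ^ 2) / Real.cos (r + π/6) ^ 4) / 24 * t ^ 4 := by
  set M : ℝ := 2 * (1 + 2 * Real.sin (r + π/6) ^ 2) / Real.cos (r + π/6) ^ 4 with hMdef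
  have hcr : 0 < Real.cos (r + π/6) := cos_r_pos hr0 hr1
  have hc : ∀ s ∈ Icc (-r) r, 0 < Real.cos (s + π/6) :=
    fun s hs => lt_of_lt_of_le hcr (cos_lower hr0 hr1 hs)
  have hcne : ∀ s ∈ Icc (-r) r, Real.cos (s + π/6) ≠ 0 := fun s hs => (hc s hs).ne'
  -- bound on G4
  have hG4 : ∀ s ∈ Icc (-r) r, |G4 s| ≤ M * |s| ^ 0 := by
    intro s hs
    simp only [pow_zero, mul_one]
    have h1 : Real.sin (s + π/6) ^ 2 ≤ Real.sin (r + π/6) ^ 2 := by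
      have e1 := Real.sin_sq_add_cos_sq (s + π/6)
      have e2 := Real.sin_sq_add_cos_sq (r + π/6)
      nlinarith [cos_lower hr0 hr1 hs, hcr, hc s hs]
    have h2 : Real.cos (r + π/6) ^ 4 ≤ Real.cos (s + π/6) ^ 4 := by
      exact pow_le_pow_left₀ hcr.le (cos_lower hr0 hr1 hs) 4
    have hG4pos : 0 ≤ G4 s := by
      unfold G4
      positivity
    rw [abs_of_nonneg hG4pos]
    unfold G4
    apply div_le_div₀ (by positivity) (by nlinarith) (by positivity) h2
  -- level 3
  have step3 : ∀ t' ∈ Icc (-r) r, |G3 t' - G3 0| ≤ M * |t'| := by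
    intro t' ht'
    have h := absBound (fun s hs => (d3 s (hcne s hs)).sub_const (G3 0)) (by simp) hG4 ht'
    norm_num at h
    exact h
  -- level 2
  have step2 : ∀ t' ∈ Icc (-r) r,
      |G2 t' - G2 0 - G3 0 * t'| ≤ M * t' ^ 2 / 2 := by
    intro t' ht'
    have hw : ∀ s ∈ Icc (-r) r,
        HasDerivAt (fun s => G2 s - G2 0 - G3 0 * s) (G3 s - G3 0) s := by
      intro s hs
      have h := ((d2 s (hcne s hs)).sub_const (G2 0)).sub ((hasDerivAt_id s).const_mul (G3 0))
      exact h.congr_deriv (by ring)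
    have h := absBound hw (by simp) (fun s hs => by
      have h2 := step3 s hs
      calc |G3 s - G3 0| ≤ M * |s| := h2
        _ = M * |s| ^ 1 := by ring) ht'
    norm_num at h
    exact h
  -- level 1
  have step1 : ∀ t' ∈ Icc (-r) r,
      |G1 t' - G1 0 - G2 0 * t' - G3 0 * t' ^ 2 / 2| ≤ M * |t'| ^ 3 / 6 := by
    intro t' ht'
    have hw : ∀ s ∈ Icc (-r) r,
        HasDerivAt (fun s => G1 s - G1 0 - G2 0 * s - G3 0 * s ^ 2 / 2)
          (G2 s - G2 0 - G3 0 * s) s := by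
      intro s hs
      have h := (((d1 s (hcne s hs)).sub_const (G1 0)).sub
          ((hasDerivAt_id s).const_mul (G2 0))).sub
          (((hasDerivAt_pow 2 s).const_mul (G3 0)).div_const 2)
      refine h.congr_deriv ?_
      symm
      push_cast
      ring
    have h := absBound hw (by simp) (fun s hs => by
      have h2 := step2 s hs
      calc |G2 s - G2 0 - G3 0 * s| ≤ M * s ^ 2 / 2 := h2
        _ = M / 2 * |s| ^ 2 := by rw [sq_abs]; ring) ht'
    norm_num at h
    calc |G1 t' - G1 0 - G2 0 * t' - G3 0 * t' ^ 2 / 2| ≤ M / 2 * |t'| ^ 3 / 3 := h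
      _ = M * |t'| ^ 3 / 6 := by ring
  -- level 0
  have step0 : ∀ t' ∈ Icc (-r) r,
      |G0 t' - G0 0 - G1 0 * t' - G2 0 * t' ^ 2 / 2 - G3 0 * t' ^ 3 / 6| ≤ M * t' ^ 4 / 24 := by
    intro t' ht'
    have hw : ∀ s ∈ Icc (-r) r,
        HasDerivAt (fun s => G0 s - G0 0 - G1 0 * s - G2 0 * s ^ 2 / 2 - G3 0 * s ^ 3 / 6)
          (G1 s - G1 0 - G2 0 * s - G3 0 * s ^ 2 / 2) s := by
      intro s hs
      have h := ((((d0 s (hcne s hs)).sub_const (G0 0)).sub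
          ((hasDerivAt_id s).const_mul (G1 0))).sub
          (((hasDerivAt_pow 2 s).const_mul (G2 0)).div_const 2)).sub
          (((hasDerivAt_pow 3 s).const_mul (G3 0)).div_const 6)
      refine h.congr_deriv ?_
      symm
      push_cast
      ring
    have h := absBound hw (by simp) (fun s hs => by
      have h2 := step1 s hs
      calc |G1 s - G1 0 - G2 0 * s - G3 0 * s ^ 2 / 2| ≤ M * |s| ^ 3 / 6 := h2
        _ = M / 6 * |s| ^ 3 := by ring) ht'
    norm_num at h
    rw [pow_abs, abs_of_nonneg (by positivity : (0:ℝ) ≤ t' ^ 4)] at h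
    calc |G0 t' - G0 0 - G1 0 * t' - G2 0 * t' ^ 2 / 2 - G3 0 * t' ^ 3 / 6|
        ≤ M / 6 * t' ^ 4 / 4 := h
      _ = M * t' ^ 4 / 24 := by ring
  have h0 := step0 t ht
  have e0 : G0 0 = 0 := hG00
  have e1 : G1 0 = Real.sqrt 3 / 3 := by unfold G1; exact hG10
  have e2 : G2 0 = 4/3 := by unfold G2; exact hG20
  have e3 : G3 0 = 8 * Real.sqrt 3 / 9 := by unfold G3; exact hG30
  rw [e0, e1, e2, e3] at h0
  calc |G0 t - (Real.sqrt 3 / 3 * t + 2/3 * t^2 + 4 * Real.sqrt 3 / 27 * t^3)|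
      = |G0 t - 0 - Real.sqrt 3 / 3 * t - 4/3 * t ^ 2 / 2 - 8 * Real.sqrt 3 / 9 * t ^ 3 / 6| := by
        ring_nf
    _ ≤ M * t ^ 4 / 24 := h0
    _ = M / 24 * t ^ 4 := by ring

theorem dixon_taylor_remainder_bound
    (f : ℝ → ℝ → ℝ)
    (hf : f = fun x y =>
      -Real.log (Real.cos (Real.sqrt 3 / 2 * x - 1 / 2 * y + Real.pi / 6))
      - Real.log (Real.cos (-(Real.sqrt 3 / 2) * x - 1 / 2 * y + Real.pi / 6))
      - Real.log (Real.cos (y + Real.pi / 6))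
      + 3 * Real.log (Real.sqrt 3 / 2))
    (r : ℝ) (hr : r ∈ Set.Ioo (0 : ℝ) (Real.pi / 3))
    (C : ℝ)
    (hC : C = 3 / 32 * ((1 + 2 * Real.sin (r + Real.pi / 6) ^ 2) / Real.cos (r + Real.pi / 6) ^ 4)) :
    ∀ x y : ℝ, x ^ 2 + y ^ 2 ≤ r ^ 2 →
      |f x y - x ^ 2 - y ^ 2 - Real.sqrt 3 / 9 * (y ^ 3 - 3 * x ^ 2 * y)|
        ≤ C * (x ^ 2 + y ^ 2) ^ 2 := by
  intro x y hxy
  obtain ⟨hr0, hr1⟩ := hr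
  have h3 := sqrt3_sq
  have ha2 : (Real.sqrt 3 / 2 * x - 1 / 2 * y) ^ 2 ≤ r ^ 2 := by
    nlinarith [sq_nonneg (x + Real.sqrt 3 * y)]
  have hb2 : (-(Real.sqrt 3 / 2) * x - 1 / 2 * y) ^ 2 ≤ r ^ 2 := by
    nlinarith [sq_nonneg (x - Real.sqrt 3 * y)]
  have hc2 : y ^ 2 ≤ r ^ 2 := by nlinarith
  have memof : ∀ t : ℝ, t ^ 2 ≤ r ^ 2 → t ∈ Icc (-r) r := by
    intro t ht
    constructor
    · nlinarith [sq_nonneg (t + r)]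
    · nlinarith [sq_nonneg (t - r)]
  have Ta := taylor3 hr0 hr1 (memof _ ha2)
  have Tb := taylor3 hr0 hr1 (memof _ hb2)
  have Tc := taylor3 hr0 hr1 (memof _ hc2)
  set M : ℝ := (2 * (1 + 2 * Real.sin (r + π/6) ^ 2) / Real.cos (r + π/6) ^ 4) / 24 with hM
  set P : ℝ → ℝ := fun t => Real.sqrt 3 / 3 * t + 2/3 * t^2 + 4 * Real.sqrt 3 / 27 * t^3 with hP
  have key : f x y - x ^ 2 - y ^ 2 - Real.sqrt 3 / 9 * (y ^ 3 - 3 * x ^ 2 * y) =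
      (G0 (Real.sqrt 3 / 2 * x - 1 / 2 * y) - P (Real.sqrt 3 / 2 * x - 1 / 2 * y))
      + (G0 (-(Real.sqrt 3 / 2) * x - 1 / 2 * y) - P (-(Real.sqrt 3 / 2) * x - 1 / 2 * y))
      + (G0 y - P y) := by
    rw [hf]
    simp only [G0, hP]
    linear_combination (x ^ 2 / 3 - Real.sqrt 3 * x ^ 2 * y / 9) * h3
  have hq : (Real.sqrt 3 / 2 * x - 1 / 2 * y) ^ 4 + (-(Real.sqrt 3 / 2) * x - 1 / 2 * y) ^ 4
      + y ^ 4 = 9/8 * (x ^ 2 + y ^ 2) ^ 2 := by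
    linear_combination ((Real.sqrt 3 ^ 2 + 3) * x ^ 4 / 8 + 3 / 4 * x ^ 2 * y ^ 2) * h3
  calc |f x y - x ^ 2 - y ^ 2 - Real.sqrt 3 / 9 * (y ^ 3 - 3 * x ^ 2 * y)|
      = |(G0 (Real.sqrt 3 / 2 * x - 1 / 2 * y) - P (Real.sqrt 3 / 2 * x - 1 / 2 * y))
        + (G0 (-(Real.sqrt 3 / 2) * x - 1 / 2 * y) - P (-(Real.sqrt 3 / 2) * x - 1 / 2 * y))
        + (G0 y - P y)| := by rw [key]
    _ ≤ |G0 (Real.sqrt 3 / 2 * x - 1 / 2 * y) - P (Real.sqrt 3 / 2 * x - 1 / 2 * y)|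
        + |G0 (-(Real.sqrt 3 / 2) * x - 1 / 2 * y) - P (-(Real.sqrt 3 / 2) * x - 1 / 2 * y)|
        + |G0 y - P y| := abs_add_three _ _ _
    _ ≤ M * (Real.sqrt 3 / 2 * x - 1 / 2 * y) ^ 4 + M * (-(Real.sqrt 3 / 2) * x - 1 / 2 * y) ^ 4
        + M * y ^ 4 := add_le_add (add_le_add Ta Tb) Tc
    _ = M * ((Real.sqrt 3 / 2 * x - 1 / 2 * y) ^ 4 + (-(Real.sqrt 3 / 2) * x - 1 / 2 * y) ^ 4
        + y ^ 4) := by ring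
    _ = M * (9/8 * (x ^ 2 + y ^ 2) ^ 2) := by rw [hq]
    _ = C * (x ^ 2 + y ^ 2) ^ 2 := by rw [hC, hM]; ring
end
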